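/- Let 𝒜 be a finite irreducible set of real d×d matrices and p ≥ d−1. Then for every n ≥ 1, (ν_p(𝒜))^{−1/n} ‖𝒜ⁿ‖^{1/n} ≤ ρ(𝒜) ≤ ‖𝒜ⁿ‖^{1/n}, where ν_p(𝒜) = max{1, ‖𝒜‖^p} / χ_p(𝒜). -/

import Mathlib

open Filter Set

/-- The set of all products of exactly `n` matrices from `𝒜`. -/
def prods {d : ℕ} (𝒜 : Set (Matrix (Fin d) (Fin d) ℝ)) (n : ℕ) :
    Set (Matrix (Fin d) (Fin d) ℝ) :=
  {P | ∃ l : List (Matrix (Fin d) (Fin d) ℝ), l.length = n ∧ (∀ A ∈ l, A ∈ 𝒜) ∧ l.prod = P}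

/-- `‖𝒜ⁿ‖`: the supremum of the norm `N` over all `n`-fold products from `𝒜`. -/
noncomputable def supN {d : ℕ} (N : Matrix (Fin d) (Fin d) ℝ → ℝ)
    (𝒜 : Set (Matrix (Fin d) (Fin d) ℝ)) (n : ℕ) : ℝ :=
  sSup (N '' prods 𝒜 n)

/-- The joint spectral radius of `𝒜` with respect to the matrix norm `N`,
given by the generalized Gelfand formula. -/
noncomputable def jsr {d : ℕ} (N : Matrix (Fin d) (Fin d) ℝ → ℝ)
    (𝒜 : Set (Matrix (Fin d) (Fin d) ℝ)) : ℝ :=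
  Filter.limsup (fun n : ℕ => (supN N 𝒜 n) ^ ((n : ℝ)⁻¹)) Filter.atTop

/-- A (matrix) norm: nonnegative, definite, absolutely homogeneous, subadditive. -/
def IsMatNorm {d : ℕ} (N : Matrix (Fin d) (Fin d) ℝ → ℝ) : Prop :=
  (∀ A, 0 ≤ N A) ∧ (∀ A, N A = 0 ↔ A = 0) ∧
  (∀ (c : ℝ) A, N (c • A) = |c| * N A) ∧ (∀ A B, N (A + B) ≤ N A + N B)

/-- Products of at most `p` factors from `𝒜` (including the empty product `1`). -/
def prodsLe {d : ℕ} (𝒜 : Set (Matrix (Fin d) (Fin d) ℝ)) (p : ℕ) :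
    Set (Matrix (Fin d) (Fin d) ℝ) :=
  ⋃ k ∈ Finset.range (p + 1), prods 𝒜 k

/-- A vector norm on `ℝ^d`: nonnegative, definite, absolutely homogeneous, subadditive. -/
def IsNorm {d : ℕ} (ν : (Fin d → ℝ) → ℝ) : Prop :=
  (∀ x, 0 ≤ ν x) ∧ (∀ x, ν x = 0 ↔ x = 0) ∧
  (∀ (a : ℝ) x, ν (a • x) = |a| * ν x) ∧ (∀ x y, ν (x + y) ≤ ν x + ν y)

/-- Operator norm of a matrix induced by the vector norm `ν` on `ℝ^d`. -/
noncomputable def opNorm {d : ℕ} (ν : (Fin d → ℝ) → ℝ)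
    (A : Matrix (Fin d) (Fin d) ℝ) : ℝ :=
  sSup ((fun x => ν (A.mulVec x)) '' {x | ν x = 1})

/-- `‖𝒜ⁿ‖` computed with the operator norm induced by `ν`. -/
noncomputable def supNu {d : ℕ} (ν : (Fin d → ℝ) → ℝ)
    (𝒜 : Set (Matrix (Fin d) (Fin d) ℝ)) (n : ℕ) : ℝ :=
  supN (opNorm ν) 𝒜 n

/-- The joint spectral radius computed with the operator norm induced by `ν`. -/
noncomputable def jsrNu {d : ℕ} (ν : (Fin d → ℝ) → ℝ)
    (𝒜 : Set (Matrix (Fin d) (Fin d) ℝ)) : ℝ :=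
  jsr (opNorm ν) 𝒜

/-- The `p`-measure of irreducibility (quasi-controllability) of `𝒜`
with respect to the vector norm `ν`:
`χ_p(𝒜) = inf_{ν x = 1} sup { t : S(t) ⊆ conv(𝒜_p(x) ∪ 𝒜_p(−x)) }`. -/
noncomputable def chi {d : ℕ} (ν : (Fin d → ℝ) → ℝ)
    (𝒜 : Set (Matrix (Fin d) (Fin d) ℝ)) (p : ℕ) : ℝ :=
  sInf ((fun x => sSup {t : ℝ | 0 ≤ t ∧
      {y | ν y ≤ t} ⊆ convexHull ℝ
        (((fun A => A.mulVec x) '' prodsLe 𝒜 p) ∪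
         ((fun A => A.mulVec (-x)) '' prodsLe 𝒜 p))}) '' {x | ν x = 1})

/-- `𝒜` is irreducible: the only common invariant subspaces are `⊥` and `⊤`. -/
def MatSetIrreducible {d : ℕ} (𝒜 : Set (Matrix (Fin d) (Fin d) ℝ)) : Prop :=
  ∀ L : Submodule ℝ (Fin d → ℝ), (∀ A ∈ 𝒜, ∀ x ∈ L, A.mulVec x ∈ L) → L = ⊥ ∨ L = ⊤

section NormLemmas


variable {d : ℕ} {ν : (Fin d → ℝ) → ℝ}


theorem nu_zero (hν : IsNorm ν) : ν 0 = 0 := (hν.2.1 0).mpr rfl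

theorem nu_neg (hν : IsNorm ν) (x : Fin d → ℝ) : ν (-x) = ν x := by
  have := hν.2.2.1 (-1) x
  simpa using this

theorem nu_sub_le (hν : IsNorm ν) (x y : Fin d → ℝ) : |ν x - ν y| ≤ ν (x - y) := by
  rw [abs_le]
  constructor
  · have h := hν.2.2.2 x (y - x)
    have h2 : x + (y - x) = y := by abel
    rw [h2] at h
    have h3 : ν (y - x) = ν (x - y) := by rw [← nu_neg hν (x - y)]; congr 1; abel
    rw [h3] at h
    linarith
  · have h := hν.2.2.2 y (x - y)
    have h2 : y + (x - y) = x := by abel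
    rw [h2] at h
    linarith

theorem nu_sum_le (hν : IsNorm ν) {ι : Type*} (s : Finset ι) (f : ι → (Fin d → ℝ)) :
    ν (∑ i ∈ s, f i) ≤ ∑ i ∈ s, ν (f i) := by
  classical
  induction s using Finset.cons_induction with
  | empty => simp [nu_zero hν]
  | cons i s hi ih =>
    rw [Finset.sum_cons, Finset.sum_cons]
    exact le_trans (hν.2.2.2 _ _) (by linarith)

theorem nu_le_mul_norm (hν : IsNorm ν) :
    ∃ C : ℝ, 0 ≤ C ∧ ∀ z : Fin d → ℝ, ν z ≤ C * ‖z‖ := by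
  classical
  refine ⟨∑ i : Fin d, ν (Pi.single i 1), Finset.sum_nonneg fun i _ => hν.1 _, fun z => ?_⟩
  have hz : z = ∑ i : Fin d, z i • (Pi.single i 1 : Fin d → ℝ) := by
    ext j
    simp [Pi.single_apply, Finset.sum_apply, mul_comm]
  calc ν z = ν (∑ i : Fin d, z i • (Pi.single i 1 : Fin d → ℝ)) := by rw [← hz]
    _ ≤ ∑ i : Fin d, ν (z i • (Pi.single i 1 : Fin d → ℝ)) := nu_sum_le hν _ _
    _ = ∑ i : Fin d, |z i| * ν (Pi.single i 1 : Fin d → ℝ) := by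
        exact Finset.sum_congr rfl fun i _ => hν.2.2.1 _ _
    _ ≤ ∑ i : Fin d, ‖z‖ * ν (Pi.single i 1 : Fin d → ℝ) := by
        refine Finset.sum_le_sum fun i _ => ?_
        have h1 : |z i| ≤ ‖z‖ := by
          have := norm_le_pi_norm z i
          simpa [Real.norm_eq_abs] using this
        exact mul_le_mul_of_nonneg_right h1 (hν.1 _)
    _ = (∑ i : Fin d, ν (Pi.single i 1 : Fin d → ℝ)) * ‖z‖ := by
        rw [Finset.sum_mul]
        exact Finset.sum_congr rfl fun i _ => mul_comm _ _

theorem nu_continuous (hν : IsNorm ν) : Continuous ν := by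
  obtain ⟨C, hC0, hC⟩ := nu_le_mul_norm hν
  have : LipschitzWith C.toNNReal ν := by
    refine LipschitzWith.of_dist_le_mul fun x y => ?_
    have h1 : dist (ν x) (ν y) ≤ ν (x - y) := by
      rw [Real.dist_eq]; exact nu_sub_le hν x y
    have h2 : ν (x - y) ≤ C * ‖x - y‖ := hC _
    have h3 : ‖x - y‖ = dist x y := (dist_eq_norm x y).symm
    have h4 : (C.toNNReal : ℝ) = max C 0 := by simp [Real.coe_toNNReal']
    rw [h4]
    calc dist (ν x) (ν y) ≤ C * ‖x - y‖ := le_trans h1 h2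
      _ ≤ max C 0 * dist x y := by
          rw [← h3]; exact mul_le_mul_of_nonneg_right (le_max_left _ _) (norm_nonneg _)
  exact this.continuous

theorem nu_lower (hν : IsNorm ν) (hd : 0 < d) :
    ∃ c : ℝ, 0 < c ∧ ∀ x : Fin d → ℝ, c * ‖x‖ ≤ ν x := by
  have hS : IsCompact (Metric.sphere (0 : Fin d → ℝ) 1) := isCompact_sphere 0 1
  have hne : (Metric.sphere (0 : Fin d → ℝ) 1).Nonempty := by
    have : Nontrivial (Fin d → ℝ) := by
      refine ⟨Pi.single ⟨0, hd⟩ 1, 0, fun h => ?_⟩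
      have := congrFun h ⟨0, hd⟩
      simp at this
    exact NormedSpace.sphere_nonempty.mpr zero_le_one
  obtain ⟨x₀, hx₀, hmin'⟩ := hS.exists_isMinOn hne (nu_continuous hν).continuousOn
  have hmin : ∀ y ∈ Metric.sphere (0 : Fin d → ℝ) 1, ν x₀ ≤ ν y := fun y hy => hmin' hy
  have hx₀norm : ‖x₀‖ = 1 := by simpa using hx₀
  have hx₀ne : x₀ ≠ 0 := by
    intro h; rw [h] at hx₀norm; simp at hx₀norm
  have hc : 0 < ν x₀ := by
    rcases lt_or_eq_of_le (hν.1 x₀) with h | h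
    · exact h
    · exact absurd ((hν.2.1 x₀).mp h.symm) hx₀ne
  refine ⟨ν x₀, hc, fun x => ?_⟩
  rcases eq_or_ne x 0 with rfl | hx
  · simp [nu_zero hν]
  · have hxn : ‖x‖ ≠ 0 := norm_ne_zero_iff.mpr hx
    have hu : ‖x‖⁻¹ • x ∈ Metric.sphere (0 : Fin d → ℝ) 1 := by
      simp [norm_smul, abs_of_nonneg (inv_nonneg.mpr (norm_nonneg x)), inv_mul_cancel₀ hxn]
    have h1 := hmin _ hu
    have h2 : ν (‖x‖ • (‖x‖⁻¹ • x)) = ‖x‖ * ν (‖x‖⁻¹ • x) := by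
      rw [hν.2.2.1]; rw [abs_of_nonneg (norm_nonneg x)]
    have h3 : ‖x‖ • (‖x‖⁻¹ • x) = x := by
      rw [smul_smul, mul_inv_cancel₀ hxn, one_smul]
    rw [h3] at h2
    calc ν x₀ * ‖x‖ ≤ ν (‖x‖⁻¹ • x) * ‖x‖ := by
          exact mul_le_mul_of_nonneg_right h1 (norm_nonneg x)
      _ = ν x := by rw [mul_comm, ← h2]

theorem nuSphere_compact (hν : IsNorm ν) (hd : 0 < d) :
    IsCompact {x : Fin d → ℝ | ν x = 1} := by
  obtain ⟨c, hc, hlow⟩ := nu_lower hν hd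
  have hclosed : IsClosed {x : Fin d → ℝ | ν x = 1} := by
    have : {x : Fin d → ℝ | ν x = 1} = ν ⁻¹' {1} := rfl
    rw [this]
    exact IsClosed.preimage (nu_continuous hν) isClosed_singleton
  have hsub : {x : Fin d → ℝ | ν x = 1} ⊆ Metric.closedBall 0 c⁻¹ := by
    intro x hx
    simp only [Metric.mem_closedBall, dist_zero_right]
    have := hlow x
    rw [hx] at this
    rw [← le_div_iff₀' hc] at this
    simpa [div_eq_inv_mul, one_div] using this
  exact (isCompact_closedBall 0 c⁻¹).of_isClosed_subset hclosed hsub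

theorem nuSphere_nonempty (hν : IsNorm ν) (hd : 0 < d) :
    {x : Fin d → ℝ | ν x = 1}.Nonempty := by
  have hx₀ne : (Pi.single (⟨0, hd⟩ : Fin d) 1 : Fin d → ℝ) ≠ 0 := by
    intro h
    have := congrFun h ⟨0, hd⟩
    simp at this
  set x₀ : Fin d → ℝ := Pi.single ⟨0, hd⟩ 1
  have hc : 0 < ν x₀ := by
    rcases lt_or_eq_of_le (hν.1 x₀) with h | h
    · exact h
    · exact absurd ((hν.2.1 x₀).mp h.symm) hx₀ne
  refine ⟨(ν x₀)⁻¹ • x₀, ?_⟩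
  show ν _ = 1
  rw [hν.2.2.1, abs_of_pos (inv_pos.mpr hc), inv_mul_cancel₀ (ne_of_gt hc)]

end NormLemmas
section OpNormLemmas

variable {d : ℕ} {ν : (Fin d → ℝ) → ℝ}

theorem mulVec_continuous' (A : Matrix (Fin d) (Fin d) ℝ) :
    Continuous (fun x : Fin d → ℝ => A.mulVec x) := by
  have : (fun x : Fin d → ℝ => A.mulVec x) = fun x => A.mulVecLin x := by
    ext x i; simp [Matrix.mulVecLin_apply]
  rw [this]
  exact LinearMap.continuous_of_finiteDimensional _

/-- The operator norm is attained at some unit vector, and bounds the values on the sphere. -/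
theorem opNorm_spec (hν : IsNorm ν) (hd : 0 < d) (A : Matrix (Fin d) (Fin d) ℝ) :
    (∃ x, ν x = 1 ∧ ν (A.mulVec x) = opNorm ν A) ∧
      (∀ y, ν y = 1 → ν (A.mulVec y) ≤ opNorm ν A) := by
  have hS := nuSphere_compact hν hd
  have hne := nuSphere_nonempty hν hd
  have hcont : ContinuousOn (fun x => ν (A.mulVec x)) {x : Fin d → ℝ | ν x = 1} :=
    ((nu_continuous hν).comp (mulVec_continuous' A)).continuousOn
  obtain ⟨x₀, hx₀, hmax'⟩ := hS.exists_isMaxOn hne hcont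
  have hmax : ∀ y ∈ {x : Fin d → ℝ | ν x = 1}, ν (A.mulVec y) ≤ ν (A.mulVec x₀) :=
    fun y hy => hmax' hy
  have hgr : IsGreatest ((fun x => ν (A.mulVec x)) '' {x : Fin d → ℝ | ν x = 1})
      (ν (A.mulVec x₀)) := by
    constructor
    · exact ⟨x₀, hx₀, rfl⟩
    · rintro r ⟨y, hy, rfl⟩; exact hmax y hy
  have heq : opNorm ν A = ν (A.mulVec x₀) := hgr.csSup_eq
  exact ⟨⟨x₀, hx₀, heq.symm⟩, fun y hy => heq ▸ hmax y hy⟩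

theorem opNorm_nonneg (hν : IsNorm ν) (hd : 0 < d) (A : Matrix (Fin d) (Fin d) ℝ) :
    0 ≤ opNorm ν A := by
  obtain ⟨⟨x, hx, hAx⟩, -⟩ := opNorm_spec hν hd A
  rw [← hAx]; exact hν.1 _

theorem nu_mulVec_le (hν : IsNorm ν) (hd : 0 < d) (A : Matrix (Fin d) (Fin d) ℝ)
    (y : Fin d → ℝ) : ν (A.mulVec y) ≤ opNorm ν A * ν y := by
  rcases eq_or_ne y 0 with rfl | hy
  · simp [Matrix.mulVec_zero, nu_zero hν]
  · have hνy : 0 < ν y := by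
      rcases lt_or_eq_of_le (hν.1 y) with h | h
      · exact h
      · exact absurd ((hν.2.1 y).mp h.symm) hy
    have hu : ν ((ν y)⁻¹ • y) = 1 := by
      rw [hν.2.2.1, abs_of_pos (inv_pos.mpr hνy), inv_mul_cancel₀ (ne_of_gt hνy)]
    have h1 := (opNorm_spec hν hd A).2 _ hu
    rw [Matrix.mulVec_smul, hν.2.2.1, abs_of_pos (inv_pos.mpr hνy)] at h1
    calc ν (A.mulVec y) = ν y * ((ν y)⁻¹ * ν (A.mulVec y)) := by
          field_simp
      _ ≤ ν y * opNorm ν A := mul_le_mul_of_nonneg_left h1 (le_of_lt hνy)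
      _ = opNorm ν A * ν y := mul_comm _ _

theorem opNorm_mul_le (hν : IsNorm ν) (hd : 0 < d) (A B : Matrix (Fin d) (Fin d) ℝ) :
    opNorm ν (A * B) ≤ opNorm ν A * opNorm ν B := by
  obtain ⟨⟨x, hx, hAx⟩, -⟩ := opNorm_spec hν hd (A * B)
  rw [← hAx, ← Matrix.mulVec_mulVec]
  calc ν (A.mulVec (B.mulVec x)) ≤ opNorm ν A * ν (B.mulVec x) := nu_mulVec_le hν hd A _
    _ ≤ opNorm ν A * (opNorm ν B * ν x) :=
        mul_le_mul_of_nonneg_left (nu_mulVec_le hν hd B x) (opNorm_nonneg hν hd A)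
    _ = opNorm ν A * opNorm ν B := by rw [hx, mul_one]

theorem opNorm_one (hν : IsNorm ν) (hd : 0 < d) : opNorm ν (1 : Matrix (Fin d) (Fin d) ℝ) = 1 := by
  obtain ⟨⟨x, hx, hAx⟩, -⟩ := opNorm_spec hν hd (1 : Matrix (Fin d) (Fin d) ℝ)
  rw [← hAx, Matrix.one_mulVec, hx]

end OpNormLemmas
section ProdsLemmas

variable {d : ℕ} {𝒜 : Set (Matrix (Fin d) (Fin d) ℝ)}

theorem prods_zero : prods 𝒜 0 = {1} := by
  ext P
  constructor
  · rintro ⟨l, hl, -, rfl⟩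
    rw [List.length_eq_zero_iff] at hl
    simp [hl]
  · rintro rfl
    exact ⟨[], rfl, by simp, rfl⟩

theorem mem_prods_mul {m n : ℕ} {P Q : Matrix (Fin d) (Fin d) ℝ}
    (hP : P ∈ prods 𝒜 m) (hQ : Q ∈ prods 𝒜 n) : P * Q ∈ prods 𝒜 (m + n) := by
  obtain ⟨l₁, hl₁, hm₁, rfl⟩ := hP
  obtain ⟨l₂, hl₂, hm₂, rfl⟩ := hQ
  exact ⟨l₁ ++ l₂, by simp [hl₁, hl₂], fun A hA => by
    rcases List.mem_append.mp hA with h | h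
    · exact hm₁ A h
    · exact hm₂ A h, by rw [List.prod_append]⟩

theorem prods_split {m n : ℕ} {P : Matrix (Fin d) (Fin d) ℝ} (hP : P ∈ prods 𝒜 (m + n)) :
    ∃ Q ∈ prods 𝒜 m, ∃ R ∈ prods 𝒜 n, P = Q * R := by
  obtain ⟨l, hl, hm, rfl⟩ := hP
  refine ⟨(l.take m).prod, ⟨l.take m, ?_, fun A hA => hm A (List.take_subset m l hA), rfl⟩,
    (l.drop m).prod, ⟨l.drop m, ?_, fun A hA => hm A (List.drop_subset m l hA), rfl⟩, ?_⟩
  · rw [List.length_take, hl]; omega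
  · rw [List.length_drop, hl]; omega
  · rw [List.prod_take_mul_prod_drop]

theorem prods_finite (h : 𝒜.Finite) (n : ℕ) : (prods 𝒜 n).Finite := by
  induction n with
  | zero => rw [prods_zero]; exact Set.finite_singleton 1
  | succ n ih =>
    have hsub : prods 𝒜 (n + 1) ⊆ Set.image2 (· * ·) 𝒜 (prods 𝒜 n) := by
      rintro P ⟨l, hl, hm, rfl⟩
      cases l with
      | nil => simp at hl
      | cons A t =>
        refine ⟨A, hm A List.mem_cons_self, t.prod,
          ⟨t, by simpa using hl, fun B hB => hm B (List.mem_cons_of_mem A hB), rfl⟩, ?_⟩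
        simp
    exact Set.Finite.subset (Set.Finite.image2 _ h ih) hsub

theorem prods_nonempty (h : 𝒜.Nonempty) (n : ℕ) : (prods 𝒜 n).Nonempty := by
  obtain ⟨A, hA⟩ := h
  exact ⟨(List.replicate n A).prod, List.replicate n A, List.length_replicate,
    fun B hB => (List.eq_of_mem_replicate hB) ▸ hA, rfl⟩

end ProdsLemmas

section SupNLemmas

variable {d : ℕ} {ν : (Fin d → ℝ) → ℝ} {𝒜 : Set (Matrix (Fin d) (Fin d) ℝ)}

theorem supNu_exists (hν : IsNorm ν) (hfin : 𝒜.Finite) (hne : 𝒜.Nonempty) (n : ℕ) :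
    ∃ P ∈ prods 𝒜 n, opNorm ν P = supNu ν 𝒜 n := by
  have h1 : ((opNorm ν) '' prods 𝒜 n).Nonempty := (prods_nonempty hne n).image _
  have h2 : ((opNorm ν) '' prods 𝒜 n).Finite := (prods_finite hfin n).image _
  have := h1.csSup_mem h2
  obtain ⟨P, hP, hPeq⟩ := this
  exact ⟨P, hP, hPeq⟩

theorem le_supNu (hν : IsNorm ν) (hfin : 𝒜.Finite) {n : ℕ} {P : Matrix (Fin d) (Fin d) ℝ}
    (hP : P ∈ prods 𝒜 n) : opNorm ν P ≤ supNu ν 𝒜 n :=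
  le_csSup (((prods_finite hfin n).image _).bddAbove) ⟨P, hP, rfl⟩

theorem supNu_le (hne : 𝒜.Nonempty) {n : ℕ} {B : ℝ}
    (h : ∀ P ∈ prods 𝒜 n, opNorm ν P ≤ B) : supNu ν 𝒜 n ≤ B := by
  refine csSup_le ((prods_nonempty hne n).image _) ?_
  rintro r ⟨P, hP, rfl⟩
  exact h P hP

theorem supNu_nonneg (hν : IsNorm ν) (hd : 0 < d) (hfin : 𝒜.Finite) (hne : 𝒜.Nonempty) (n : ℕ) :
    0 ≤ supNu ν 𝒜 n := by
  obtain ⟨P, hP, hPeq⟩ := supNu_exists hν hfin hne n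
  rw [← hPeq]
  exact opNorm_nonneg hν hd P

theorem supNu_zero (hν : IsNorm ν) (hd : 0 < d) : supNu ν 𝒜 0 = 1 := by
  show sSup _ = 1
  rw [prods_zero]
  rw [Set.image_singleton, csSup_singleton, opNorm_one hν hd]

theorem supNu_submul (hν : IsNorm ν) (hd : 0 < d) (hfin : 𝒜.Finite) (hne : 𝒜.Nonempty)
    (m n : ℕ) : supNu ν 𝒜 (m + n) ≤ supNu ν 𝒜 m * supNu ν 𝒜 n := by
  refine supNu_le hne fun P hP => ?_
  obtain ⟨Q, hQ, R, hR, rfl⟩ := prods_split hP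
  calc opNorm ν (Q * R) ≤ opNorm ν Q * opNorm ν R := opNorm_mul_le hν hd Q R
    _ ≤ supNu ν 𝒜 m * supNu ν 𝒜 n := by
        refine mul_le_mul (le_supNu hν hfin hQ) (le_supNu hν hfin hR)
          (opNorm_nonneg hν hd R) (supNu_nonneg hν hd hfin hne m)

theorem supNu_le_pow (hν : IsNorm ν) (hd : 0 < d) (hfin : 𝒜.Finite) (hne : 𝒜.Nonempty)
    (k : ℕ) : supNu ν 𝒜 k ≤ (supNu ν 𝒜 1) ^ k := by
  induction k with
  | zero => rw [supNu_zero hν hd, pow_zero]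
  | succ k ih =>
    calc supNu ν 𝒜 (k + 1) = supNu ν 𝒜 (1 + k) := by rw [Nat.add_comm]
      _ ≤ supNu ν 𝒜 1 * supNu ν 𝒜 k := supNu_submul hν hd hfin hne 1 k
      _ ≤ supNu ν 𝒜 1 * supNu ν 𝒜 1 ^ k :=
          mul_le_mul_of_nonneg_left ih (supNu_nonneg hν hd hfin hne 1)
      _ = supNu ν 𝒜 1 ^ (k + 1) := by rw [pow_succ, mul_comm]

end SupNLemmas
section ChiLemmas

variable {d : ℕ} {ν : (Fin d → ℝ) → ℝ} {𝒜 : Set (Matrix (Fin d) (Fin d) ℝ)} {p : ℕ}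

/-- The convex hull appearing in the definition of `chi`. -/
def hullSet (ν : (Fin d → ℝ) → ℝ) (𝒜 : Set (Matrix (Fin d) (Fin d) ℝ)) (p : ℕ)
    (x : Fin d → ℝ) : Set (Fin d → ℝ) :=
  convexHull ℝ (((fun A => A.mulVec x) '' prodsLe 𝒜 p) ∪
    ((fun A => A.mulVec (-x)) '' prodsLe 𝒜 p))

/-- The set of admissible radii in the definition of `chi`. -/
def tSet (ν : (Fin d → ℝ) → ℝ) (𝒜 : Set (Matrix (Fin d) (Fin d) ℝ)) (p : ℕ)
    (x : Fin d → ℝ) : Set ℝ :=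
  {t : ℝ | 0 ≤ t ∧ {y | ν y ≤ t} ⊆ hullSet ν 𝒜 p x}

/-- The inner sSup in the definition of `chi`. -/
noncomputable def Phi (ν : (Fin d → ℝ) → ℝ) (𝒜 : Set (Matrix (Fin d) (Fin d) ℝ)) (p : ℕ)
    (x : Fin d → ℝ) : ℝ :=
  sSup (tSet ν 𝒜 p x)

theorem chi_eq : chi ν 𝒜 p = sInf ((Phi ν 𝒜 p) '' {x | ν x = 1}) := rfl

theorem mem_prodsLe {B : Matrix (Fin d) (Fin d) ℝ} :
    B ∈ prodsLe 𝒜 p ↔ ∃ k ≤ p, B ∈ prods 𝒜 k := by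
  simp only [prodsLe, Set.mem_iUnion, Finset.mem_range, Nat.lt_succ_iff, exists_prop]

theorem one_mem_prodsLe : (1 : Matrix (Fin d) (Fin d) ℝ) ∈ prodsLe 𝒜 p :=
  mem_prodsLe.mpr ⟨0, Nat.zero_le p, by rw [prods_zero]; rfl⟩

theorem opNorm_prodsLe_le (hν : IsNorm ν) (hd : 0 < d) (hfin : 𝒜.Finite) (hne : 𝒜.Nonempty)
    {B : Matrix (Fin d) (Fin d) ℝ} (hB : B ∈ prodsLe 𝒜 p) :
    opNorm ν B ≤ max 1 (supNu ν 𝒜 1 ^ p) := by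
  obtain ⟨k, hk, hBk⟩ := mem_prodsLe.mp hB
  have h1 : opNorm ν B ≤ supNu ν 𝒜 1 ^ k :=
    le_trans (le_supNu hν hfin hBk) (supNu_le_pow hν hd hfin hne k)
  rcases le_or_gt 1 (supNu ν 𝒜 1) with h | h
  · exact le_trans h1 (le_trans (pow_le_pow_right₀ h hk) (le_max_right _ _))
  · exact le_trans h1 (le_trans (pow_le_one₀ (supNu_nonneg hν hd hfin hne 1) h.le)
      (le_max_left _ _))

theorem convex_nu_le (hν : IsNorm ν) (M : ℝ) : Convex ℝ {y : Fin d → ℝ | ν y ≤ M} := by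
  intro y hy z hz a b ha hb hab
  simp only [Set.mem_setOf_eq] at *
  calc ν (a • y + b • z) ≤ ν (a • y) + ν (b • z) := hν.2.2.2 _ _
    _ = |a| * ν y + |b| * ν z := by rw [hν.2.2.1, hν.2.2.1]
    _ = a * ν y + b * ν z := by rw [abs_of_nonneg ha, abs_of_nonneg hb]
    _ ≤ a * M + b * M := by
        refine add_le_add (mul_le_mul_of_nonneg_left hy ha) (mul_le_mul_of_nonneg_left hz hb)
    _ = M := by rw [← add_mul, hab, one_mul]

theorem hullSet_subset (hν : IsNorm ν) (hd : 0 < d) (hfin : 𝒜.Finite) (hne : 𝒜.Nonempty)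
    {x : Fin d → ℝ} (hx : ν x = 1) :
    hullSet ν 𝒜 p x ⊆ {y : Fin d → ℝ | ν y ≤ max 1 (supNu ν 𝒜 1 ^ p)} := by
  refine convexHull_min ?_ (convex_nu_le hν _)
  rintro w (⟨B, hB, rfl⟩ | ⟨B, hB, rfl⟩)
  · calc ν (B.mulVec x) ≤ opNorm ν B * ν x := nu_mulVec_le hν hd B x
      _ = opNorm ν B := by rw [hx, mul_one]
      _ ≤ _ := opNorm_prodsLe_le hν hd hfin hne hB
  · calc ν (B.mulVec (-x)) ≤ opNorm ν B * ν (-x) := nu_mulVec_le hν hd B (-x)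
      _ = opNorm ν B := by rw [nu_neg hν, hx, mul_one]
      _ ≤ _ := opNorm_prodsLe_le hν hd hfin hne hB

theorem zero_mem_tSet (hν : IsNorm ν) {x : Fin d → ℝ} (hx : ν x = 1) :
    (0 : ℝ) ∈ tSet ν 𝒜 p x := by
  refine ⟨le_refl 0, fun y hy => ?_⟩
  have hy0 : y = 0 := (hν.2.1 y).mp (le_antisymm hy (hν.1 y))
  subst hy0
  have hxmem : x ∈ hullSet ν 𝒜 p x :=
    subset_convexHull ℝ _ (Or.inl ⟨1, one_mem_prodsLe, Matrix.one_mulVec x⟩)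
  have hnxmem : -x ∈ hullSet ν 𝒜 p x :=
    subset_convexHull ℝ _ (Or.inr ⟨1, one_mem_prodsLe, Matrix.one_mulVec (-x)⟩)
  have hconv : Convex ℝ (hullSet ν 𝒜 p x) := convex_convexHull ℝ _
  have := hconv hxmem hnxmem (by norm_num : (0:ℝ) ≤ 1/2) (by norm_num : (0:ℝ) ≤ 1/2)
    (by norm_num)
  simpa using this

theorem tSet_le (hν : IsNorm ν) (hd : 0 < d) (hfin : 𝒜.Finite) (hne : 𝒜.Nonempty)
    {x : Fin d → ℝ} (hx : ν x = 1) {t : ℝ} (ht : t ∈ tSet ν 𝒜 p x) :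
    t ≤ max 1 (supNu ν 𝒜 1 ^ p) := by
  obtain ⟨u, hu⟩ := nuSphere_nonempty hν hd
  have h1 : ν (t • u) = t := by
    rw [hν.2.2.1, abs_of_nonneg ht.1, hu, mul_one]
  have h2 : t • u ∈ hullSet ν 𝒜 p x := ht.2 (by rw [Set.mem_setOf_eq, h1])
  have h3 := hullSet_subset hν hd hfin hne hx h2
  rw [Set.mem_setOf_eq, h1] at h3
  exact h3

theorem tSet_bddAbove (hν : IsNorm ν) (hd : 0 < d) (hfin : 𝒜.Finite) (hne : 𝒜.Nonempty)
    {x : Fin d → ℝ} (hx : ν x = 1) : BddAbove (tSet ν 𝒜 p x) :=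
  ⟨max 1 (supNu ν 𝒜 1 ^ p), fun t ht => tSet_le hν hd hfin hne hx ht⟩

theorem Phi_nonneg (hν : IsNorm ν) (hd : 0 < d) (hfin : 𝒜.Finite) (hne : 𝒜.Nonempty)
    {x : Fin d → ℝ} (hx : ν x = 1) : 0 ≤ Phi ν 𝒜 p x :=
  le_csSup (tSet_bddAbove hν hd hfin hne hx) (zero_mem_tSet hν hx)

theorem Phi_le (hν : IsNorm ν) (hd : 0 < d) (hfin : 𝒜.Finite) (hne : 𝒜.Nonempty)
    {x : Fin d → ℝ} (hx : ν x = 1) : Phi ν 𝒜 p x ≤ max 1 (supNu ν 𝒜 1 ^ p) :=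
  csSup_le ⟨0, zero_mem_tSet hν hx⟩ fun t ht => tSet_le hν hd hfin hne hx ht

theorem chi_nonneg (hν : IsNorm ν) (hd : 0 < d) (hfin : 𝒜.Finite) (hne : 𝒜.Nonempty) :
    0 ≤ chi ν 𝒜 p := by
  rw [chi_eq]
  refine le_csInf ((nuSphere_nonempty hν hd).image _) ?_
  rintro r ⟨x, hx, rfl⟩
  exact Phi_nonneg hν hd hfin hne hx

theorem chi_le_Phi (hν : IsNorm ν) (hd : 0 < d) (hfin : 𝒜.Finite) (hne : 𝒜.Nonempty)
    {z : Fin d → ℝ} (hz : ν z = 1) : chi ν 𝒜 p ≤ Phi ν 𝒜 p z := by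
  rw [chi_eq]
  refine csInf_le ⟨0, ?_⟩ ⟨z, hz, rfl⟩
  rintro r ⟨x, hx, rfl⟩
  exact Phi_nonneg hν hd hfin hne hx

theorem chi_le_M (hν : IsNorm ν) (hd : 0 < d) (hfin : 𝒜.Finite) (hne : 𝒜.Nonempty) :
    chi ν 𝒜 p ≤ max 1 (supNu ν 𝒜 1 ^ p) := by
  obtain ⟨u, hu⟩ := nuSphere_nonempty hν hd
  exact le_trans (chi_le_Phi hν hd hfin hne hu) (Phi_le hν hd hfin hne hu)

theorem ball_subset_hullSet (hν : IsNorm ν) {z : Fin d → ℝ} (hz : ν z = 1)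
    {t : ℝ} (ht : t < Phi ν 𝒜 p z) :
    {y : Fin d → ℝ | ν y ≤ t} ⊆ hullSet ν 𝒜 p z := by
  obtain ⟨t', ht', htt'⟩ := exists_lt_of_lt_csSup ⟨0, zero_mem_tSet hν hz⟩ ht
  exact fun y hy => ht'.2 (le_trans hy htt'.le)

end ChiLemmas
section KeyLemmas

variable {d : ℕ} {ν : (Fin d → ℝ) → ℝ} {𝒜 : Set (Matrix (Fin d) (Fin d) ℝ)} {p : ℕ}

theorem supNu_le_M (hν : IsNorm ν) (hd : 0 < d) (hfin : 𝒜.Finite) (hne : 𝒜.Nonempty)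
    {k : ℕ} (hk : k ≤ p) : supNu ν 𝒜 k ≤ max 1 (supNu ν 𝒜 1 ^ p) := by
  have h1 := supNu_le_pow hν hd hfin hne k
  rcases le_or_gt 1 (supNu ν 𝒜 1) with h | h
  · exact le_trans h1 (le_trans (pow_le_pow_right₀ h hk) (le_max_right _ _))
  · exact le_trans h1 (le_trans (pow_le_one₀ (supNu_nonneg hν hd hfin hne 1) h.le)
      (le_max_left _ _))

theorem key_ineq (hν : IsNorm ν) (hd : 0 < d) (hfin : 𝒜.Finite) (hne : 𝒜.Nonempty) (m n : ℕ) :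
    chi ν 𝒜 p * (supNu ν 𝒜 m * supNu ν 𝒜 n) ≤
      max 1 (supNu ν 𝒜 1 ^ p) * supNu ν 𝒜 (m + n) := by
  set M : ℝ := max 1 (supNu ν 𝒜 1 ^ p) with hMdef
  have hM1 : (1:ℝ) ≤ M := le_max_left _ _
  have ham := supNu_nonneg hν hd hfin hne m
  have han := supNu_nonneg hν hd hfin hne n
  have hR0 : 0 ≤ M * supNu ν 𝒜 (m + n) :=
    mul_nonneg (by linarith) (supNu_nonneg hν hd hfin hne (m + n))
  rcases eq_or_lt_of_le ham with ham0 | hampos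
  · rw [← ham0, zero_mul, mul_zero]; exact hR0
  rcases eq_or_lt_of_le han with han0 | hanpos
  · rw [← han0, mul_zero, mul_zero]; exact hR0
  -- choose extremal products and vectors
  obtain ⟨P, hP, hPeq⟩ := supNu_exists hν hfin hne m
  obtain ⟨⟨x, hx, hPx⟩, -⟩ := opNorm_spec hν hd P
  obtain ⟨Q, hQ, hQeq⟩ := supNu_exists hν hfin hne n
  obtain ⟨⟨y, hy, hQy⟩, -⟩ := opNorm_spec hν hd Q
  have hPxval : ν (P.mulVec x) = supNu ν 𝒜 m := by rw [hPx, hPeq]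
  have hQyval : ν (Q.mulVec y) = supNu ν 𝒜 n := by rw [hQy, hQeq]
  set z : Fin d → ℝ := (supNu ν 𝒜 m)⁻¹ • P.mulVec x with hzdef
  have hz : ν z = 1 := by
    rw [hzdef, hν.2.2.1, abs_of_pos (inv_pos.mpr hampos), hPxval,
      inv_mul_cancel₀ (ne_of_gt hampos)]
  have claim : ∀ t : ℝ, 0 ≤ t → t < Phi ν 𝒜 p z →
      t * (supNu ν 𝒜 m * supNu ν 𝒜 n) ≤ M * supNu ν 𝒜 (m + n) := by
    intro t ht htlt
    have hsub := ball_subset_hullSet hν hz htlt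
    have hty : t • y ∈ hullSet ν 𝒜 p z := by
      refine hsub ?_
      rw [Set.mem_setOf_eq, hν.2.2.1, abs_of_nonneg ht, hy, mul_one]
    have hconvexOn : ConvexOn ℝ Set.univ (fun w => ν (Q.mulVec w)) := by
      refine ⟨convex_univ, fun u _ v _ a b ha hb hab => ?_⟩
      simp only
      rw [Matrix.mulVec_add, Matrix.mulVec_smul, Matrix.mulVec_smul]
      calc ν (a • Q.mulVec u + b • Q.mulVec v)
          ≤ ν (a • Q.mulVec u) + ν (b • Q.mulVec v) := hν.2.2.2 _ _
        _ = a * ν (Q.mulVec u) + b * ν (Q.mulVec v) := by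
            rw [hν.2.2.1, hν.2.2.1, abs_of_nonneg ha, abs_of_nonneg hb]
    obtain ⟨w, hw, hle⟩ := hconvexOn.exists_ge_of_mem_convexHull (Set.subset_univ _) hty
    -- compute the left side of hle
    have hlhs : ν (Q.mulVec (t • y)) = t * supNu ν 𝒜 n := by
      rw [Matrix.mulVec_smul, hν.2.2.1, abs_of_nonneg ht, hQyval]
    -- bound the right side
    have hcentral : ∀ B ∈ prodsLe 𝒜 p,
        ν (Q.mulVec (B.mulVec z)) ≤ (supNu ν 𝒜 m)⁻¹ * (M * supNu ν 𝒜 (m + n)) := by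
      intro B hB
      obtain ⟨k, hk, hBk⟩ := mem_prodsLe.mp hB
      have hmem : Q * (B * P) ∈ prods 𝒜 (n + (k + m)) :=
        mem_prods_mul hQ (mem_prods_mul hBk hP)
      have hidx : n + (k + m) = k + (m + n) := by omega
      rw [hidx] at hmem
      have h1 : ν ((Q * (B * P)).mulVec x) ≤ M * supNu ν 𝒜 (m + n) := by
        calc ν ((Q * (B * P)).mulVec x) ≤ opNorm ν (Q * (B * P)) * ν x :=
              nu_mulVec_le hν hd _ x
          _ = opNorm ν (Q * (B * P)) := by rw [hx, mul_one]
          _ ≤ supNu ν 𝒜 (k + (m + n)) := le_supNu hν hfin hmem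
          _ ≤ supNu ν 𝒜 k * supNu ν 𝒜 (m + n) := supNu_submul hν hd hfin hne k (m + n)
          _ ≤ M * supNu ν 𝒜 (m + n) :=
              mul_le_mul_of_nonneg_right (supNu_le_M hν hd hfin hne hk)
                (supNu_nonneg hν hd hfin hne (m + n))
      have h2 : Q.mulVec (B.mulVec z) = (supNu ν 𝒜 m)⁻¹ • (Q * (B * P)).mulVec x := by
        rw [hzdef, Matrix.mulVec_smul, Matrix.mulVec_smul, Matrix.mulVec_mulVec,
          Matrix.mulVec_mulVec, mul_assoc]
      rw [h2, hν.2.2.1, abs_of_pos (inv_pos.mpr hampos)]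
      exact mul_le_mul_of_nonneg_left h1 (inv_nonneg.mpr ham)
    have hrhs : ν (Q.mulVec w) ≤ (supNu ν 𝒜 m)⁻¹ * (M * supNu ν 𝒜 (m + n)) := by
      rcases hw with ⟨B, hB, rfl⟩ | ⟨B, hB, rfl⟩
      · exact hcentral B hB
      · have hneg : Q.mulVec (B.mulVec (-z)) = -(Q.mulVec (B.mulVec z)) := by
          rw [Matrix.mulVec_neg, Matrix.mulVec_neg]
        rw [hneg, nu_neg hν]
        exact hcentral B hB
    have hchain : t * supNu ν 𝒜 n ≤ (supNu ν 𝒜 m)⁻¹ * (M * supNu ν 𝒜 (m + n)) := by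
      rw [← hlhs]; exact le_trans hle hrhs
    calc t * (supNu ν 𝒜 m * supNu ν 𝒜 n) = (t * supNu ν 𝒜 n) * supNu ν 𝒜 m := by ring
      _ ≤ ((supNu ν 𝒜 m)⁻¹ * (M * supNu ν 𝒜 (m + n))) * supNu ν 𝒜 m :=
          mul_le_mul_of_nonneg_right hchain ham
      _ = M * supNu ν 𝒜 (m + n) := by
          field_simp
  -- conclude by a density argument
  by_contra hcon
  push_neg at hcon
  have hc : 0 < supNu ν 𝒜 m * supNu ν 𝒜 n := mul_pos hampos hanpos
  set R := M * supNu ν 𝒜 (m + n) with hRdef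
  have h1 : R / (supNu ν 𝒜 m * supNu ν 𝒜 n) < chi ν 𝒜 p := (div_lt_iff₀ hc).mpr hcon
  set t := (R / (supNu ν 𝒜 m * supNu ν 𝒜 n) + chi ν 𝒜 p) / 2 with htdef
  have hdiv0 : 0 ≤ R / (supNu ν 𝒜 m * supNu ν 𝒜 n) := div_nonneg hR0 hc.le
  have ht1 : R / (supNu ν 𝒜 m * supNu ν 𝒜 n) < t := by rw [htdef]; linarith
  have ht2 : t < chi ν 𝒜 p := by rw [htdef]; linarith
  have ht0 : 0 ≤ t := by linarith
  have ht3 : t < Phi ν 𝒜 p z := lt_of_lt_of_le ht2 (chi_le_Phi hν hd hfin hne hz)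
  have h2 := claim t ht0 ht3
  have h3 : R < t * (supNu ν 𝒜 m * supNu ν 𝒜 n) := (div_lt_iff₀ hc).mp ht1
  linarith

end KeyLemmas
section LimsupLemmas

variable {d : ℕ} {ν : (Fin d → ℝ) → ℝ} {𝒜 : Set (Matrix (Fin d) (Fin d) ℝ)} {p : ℕ}

theorem jsrNu_eq : jsrNu ν 𝒜 = Filter.limsup (fun k : ℕ => (supNu ν 𝒜 k) ^ ((k : ℝ)⁻¹))
    Filter.atTop := rfl

theorem f_le_bound (hν : IsNorm ν) (hd : 0 < d) (hfin : 𝒜.Finite) (hne : 𝒜.Nonempty) (k : ℕ) :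
    (supNu ν 𝒜 k) ^ ((k : ℝ)⁻¹) ≤ max 1 (supNu ν 𝒜 1) := by
  rcases Nat.eq_zero_or_pos k with rfl | hk
  · simp
  have hk0 : (k : ℝ) ≠ 0 := Nat.cast_ne_zero.mpr (by omega)
  have h1 : supNu ν 𝒜 k ≤ (max 1 (supNu ν 𝒜 1)) ^ k :=
    le_trans (supNu_le_pow hν hd hfin hne k)
      (pow_le_pow_left₀ (supNu_nonneg hν hd hfin hne 1) (le_max_right _ _) k)
  calc (supNu ν 𝒜 k) ^ ((k : ℝ)⁻¹) ≤ ((max 1 (supNu ν 𝒜 1)) ^ k) ^ ((k : ℝ)⁻¹) :=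
        Real.rpow_le_rpow (supNu_nonneg hν hd hfin hne k) h1 (inv_nonneg.mpr (Nat.cast_nonneg k))
    _ = max 1 (supNu ν 𝒜 1) := by
        rw [← Real.rpow_natCast (max 1 (supNu ν 𝒜 1)) k, ← Real.rpow_mul
          (le_trans zero_le_one (le_max_left _ _)), mul_inv_cancel₀ hk0, Real.rpow_one]

theorem jsr_bddAbove (hν : IsNorm ν) (hd : 0 < d) (hfin : 𝒜.Finite) (hne : 𝒜.Nonempty) :
    Filter.IsBoundedUnder (· ≤ ·) Filter.atTop
      (fun k : ℕ => (supNu ν 𝒜 k) ^ ((k : ℝ)⁻¹)) :=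
  Filter.isBoundedUnder_of ⟨max 1 (supNu ν 𝒜 1), fun k => f_le_bound hν hd hfin hne k⟩

theorem jsrNu_nonneg (hν : IsNorm ν) (hd : 0 < d) (hfin : 𝒜.Finite) (hne : 𝒜.Nonempty) :
    0 ≤ jsrNu ν 𝒜 := by
  rw [jsrNu_eq]
  refine Filter.le_limsup_of_frequently_le ?_ (jsr_bddAbove hν hd hfin hne)
  exact Filter.Eventually.frequently (Filter.Eventually.of_forall fun k =>
    Real.rpow_nonneg (supNu_nonneg hν hd hfin hne k) _)

theorem tendsto_rpow_inv_nat_one {C : ℝ} (hC : 0 < C) :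
    Filter.Tendsto (fun k : ℕ => C ^ ((k : ℝ)⁻¹)) Filter.atTop (nhds 1) := by
  have heq : (fun k : ℕ => C ^ ((k : ℝ)⁻¹)) =
      fun k : ℕ => Real.exp ((k : ℝ)⁻¹ * Real.log C) := by
    ext k
    rw [Real.rpow_def_of_pos hC, mul_comm]
  rw [heq]
  have h1 : Filter.Tendsto (fun k : ℕ => (k : ℝ)⁻¹ * Real.log C) Filter.atTop (nhds 0) := by
    have := (tendsto_inv_atTop_nhds_zero_nat (𝕜 := ℝ)).mul_const (Real.log C)
    rwa [zero_mul] at this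
  have h2 := (Real.continuous_exp.tendsto 0).comp h1
  simpa [Function.comp_def] using h2

/-- Lower bound: `((M/χ)^(1/n))⁻¹ * (supNu n)^(1/n) ≤ jsr`. -/
theorem jsr_lower (hν : IsNorm ν) (hd : 0 < d) (hfin : 𝒜.Finite) (hne : 𝒜.Nonempty)
    {n : ℕ} (hn : 1 ≤ n) :
    ((max 1 (supNu ν 𝒜 1 ^ p) / chi ν 𝒜 p) ^ ((n : ℝ)⁻¹))⁻¹ *
      (supNu ν 𝒜 n) ^ ((n : ℝ)⁻¹) ≤ jsrNu ν 𝒜 := by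
  set M : ℝ := max 1 (supNu ν 𝒜 1 ^ p) with hMdef
  have hM1 : (1:ℝ) ≤ M := le_max_left _ _
  have hM0 : (0:ℝ) < M := lt_of_lt_of_le one_pos hM1
  have hn0 : ((n : ℝ))⁻¹ ≠ 0 := inv_ne_zero (Nat.cast_ne_zero.mpr (by omega))
  have he0 : (0:ℝ) ≤ (n : ℝ)⁻¹ := inv_nonneg.mpr (Nat.cast_nonneg n)
  have han := supNu_nonneg hν hd hfin hne n
  rcases eq_or_lt_of_le (chi_nonneg (p := p) hν hd hfin hne) with hchi0 | hchi
  · rw [← hchi0, div_zero, Real.zero_rpow hn0, inv_zero, zero_mul]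
    exact jsrNu_nonneg hν hd hfin hne
  -- χ > 0
  set c : ℝ := chi ν 𝒜 p / M * supNu ν 𝒜 n with hcdef
  have hc0 : 0 ≤ c := mul_nonneg (div_nonneg hchi.le hM0.le) han
  have hdivle : chi ν 𝒜 p / M ≤ 1 :=
    (div_le_one hM0).mpr (chi_le_M hν hd hfin hne)
  -- LHS equals c ^ (1/n)
  have hLHS : ((M / chi ν 𝒜 p) ^ ((n : ℝ)⁻¹))⁻¹ * (supNu ν 𝒜 n) ^ ((n : ℝ)⁻¹) =
      c ^ ((n : ℝ)⁻¹) := by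
    rw [← Real.inv_rpow (div_nonneg hM0.le hchi.le), inv_div,
      ← Real.mul_rpow (div_nonneg hchi.le hM0.le) han]
  rw [hLHS]
  -- the iterated key inequality
  have hiter : ∀ j : ℕ, c ^ (j + 1) ≤ supNu ν 𝒜 ((j + 1) * n) := by
    intro j
    induction j with
    | zero =>
      have h0 : (0 + 1) * n = n := by ring
      rw [pow_one, h0, hcdef]
      exact mul_le_of_le_one_left han hdivle
    | succ j ih =>
      have hkey := key_ineq (p := p) hν hd hfin hne ((j + 1) * n) n
      calc c ^ (j + 2) = c ^ (j + 1) * c := by ring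
        _ ≤ supNu ν 𝒜 ((j + 1) * n) * c := mul_le_mul_of_nonneg_right ih hc0
        _ = chi ν 𝒜 p * (supNu ν 𝒜 ((j + 1) * n) * supNu ν 𝒜 n) / M := by
            rw [hcdef]; ring
        _ ≤ M * supNu ν 𝒜 ((j + 1) * n + n) / M := by
            exact div_le_div_of_nonneg_right hkey hM0.le
        _ = supNu ν 𝒜 ((j + 2) * n) := by
            rw [mul_div_assoc, mul_comm, div_mul_cancel₀ _ (ne_of_gt hM0)]
            congr 1
            ring
  -- conclude via frequently
  rw [jsrNu_eq]
  refine Filter.le_limsup_of_frequently_le ?_ (jsr_bddAbove hν hd hfin hne)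
  rw [Filter.frequently_atTop]
  intro i
  refine ⟨(i + 1) * n, ?_, ?_⟩
  · calc i ≤ i + 1 := Nat.le_succ i
      _ = (i + 1) * 1 := (mul_one _).symm
      _ ≤ (i + 1) * n := Nat.mul_le_mul_left _ hn
  · have h1 : c ^ (i + 1) ≤ supNu ν 𝒜 ((i + 1) * n) := hiter i
    have hi0 : ((i : ℝ) + 1) ≠ 0 := by positivity
    have hnr : ((n : ℝ)) ≠ 0 := Nat.cast_ne_zero.mpr (by omega)
    have hexp : (n : ℝ)⁻¹ = ((i + 1 : ℕ) : ℝ) * (((i + 1) * n : ℕ) : ℝ)⁻¹ := by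
      push_cast
      field_simp
    calc c ^ ((n : ℝ)⁻¹) = (c ^ (i + 1 : ℕ)) ^ ((((i + 1) * n : ℕ) : ℝ)⁻¹) := by
          rw [← Real.rpow_natCast c (i + 1), ← Real.rpow_mul hc0, ← hexp]
      _ ≤ (supNu ν 𝒜 ((i + 1) * n)) ^ ((((i + 1) * n : ℕ) : ℝ)⁻¹) :=
          Real.rpow_le_rpow (pow_nonneg hc0 _) h1
            (inv_nonneg.mpr (Nat.cast_nonneg _))

/-- Upper bound: `jsr ≤ (supNu n)^(1/n)`. -/
theorem jsr_upper (hν : IsNorm ν) (hd : 0 < d) (hfin : 𝒜.Finite) (hne : 𝒜.Nonempty)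
    {n : ℕ} (hn : 1 ≤ n) :
    jsrNu ν 𝒜 ≤ (supNu ν 𝒜 n) ^ ((n : ℝ)⁻¹) := by
  have hnn : (0:ℕ) < n := hn
  have hnc : ((n : ℝ)) ≠ 0 := Nat.cast_ne_zero.mpr (by omega)
  have han := supNu_nonneg hν hd hfin hne n
  have haux : ∀ q r : ℕ, supNu ν 𝒜 (n * q + r) ≤ supNu ν 𝒜 n ^ q * supNu ν 𝒜 r := by
    intro q r
    induction q with
    | zero => simp
    | succ q ih =>
      have h1 : n * (q + 1) + r = n + (n * q + r) := by ring
      rw [h1]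
      calc supNu ν 𝒜 (n + (n * q + r)) ≤ supNu ν 𝒜 n * supNu ν 𝒜 (n * q + r) :=
            supNu_submul hν hd hfin hne n (n * q + r)
        _ ≤ supNu ν 𝒜 n * (supNu ν 𝒜 n ^ q * supNu ν 𝒜 r) :=
            mul_le_mul_of_nonneg_left ih han
        _ = supNu ν 𝒜 n ^ (q + 1) * supNu ν 𝒜 r := by ring
  rcases eq_or_lt_of_le han with han0 | hanpos
  · -- supNu n = 0 : everything is eventually zero
    have hev : ∀ k, n ≤ k → (supNu ν 𝒜 k) ^ ((k : ℝ)⁻¹) = 0 := by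
      intro k hk
      have h1 : supNu ν 𝒜 k ≤ 0 := by
        have h2 := haux 1 (k - n)
        rw [pow_one, ← han0, zero_mul] at h2
        have h3 : n * 1 + (k - n) = k := by omega
        rwa [h3] at h2
      have h4 : supNu ν 𝒜 k = 0 := le_antisymm h1 (supNu_nonneg hν hd hfin hne k)
      rw [h4]
      exact Real.zero_rpow (inv_ne_zero (Nat.cast_ne_zero.mpr (by omega)))
    have hlim : jsrNu ν 𝒜 = 0 := by
      rw [jsrNu_eq]
      have : Filter.limsup (fun k : ℕ => (supNu ν 𝒜 k) ^ ((k : ℝ)⁻¹)) Filter.atTop =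
          Filter.limsup (fun _ : ℕ => (0:ℝ)) Filter.atTop := by
        apply Filter.limsup_congr
        filter_upwards [Filter.eventually_ge_atTop n] with k hk
        exact hev k hk
      rw [this, Filter.limsup_const]
    rw [hlim, ← han0, Real.zero_rpow (inv_ne_zero hnc)]
  -- supNu n > 0
  set C : ℝ := (max 1 (supNu ν 𝒜 1)) ^ n with hCdef
  have hC1 : (1:ℝ) ≤ C := one_le_pow₀ (le_max_left _ _)
  set D : ℝ := max 1 (supNu ν 𝒜 n)⁻¹ with hDdef
  have hD1 : (1:ℝ) ≤ D := le_max_left _ _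
  set C' : ℝ := C * D with hC'def
  have hC'1 : (1:ℝ) ≤ C' := one_le_mul_of_one_le_of_one_le hC1 hD1
  have hC'0 : (0:ℝ) < C' := lt_of_lt_of_le one_pos hC'1
  have hrC : ∀ r : ℕ, r ≤ n → supNu ν 𝒜 r ≤ C := by
    intro r hr
    calc supNu ν 𝒜 r ≤ supNu ν 𝒜 1 ^ r := supNu_le_pow hν hd hfin hne r
      _ ≤ (max 1 (supNu ν 𝒜 1)) ^ r :=
          pow_le_pow_left₀ (supNu_nonneg hν hd hfin hne 1) (le_max_right _ _) r
      _ ≤ C := pow_le_pow_right₀ (le_max_left _ _) hr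
  have claim : ∀ k : ℕ, 1 ≤ k → (supNu ν 𝒜 k) ^ ((k : ℝ)⁻¹) ≤
      (supNu ν 𝒜 n) ^ ((n : ℝ)⁻¹) * C' ^ ((k : ℝ)⁻¹) := by
    intro k hk
    have hkc : ((k : ℝ)) ≠ 0 := Nat.cast_ne_zero.mpr (by omega)
    set q : ℕ := k / n with hqdef
    set r : ℕ := k % n with hrdef
    have hkqr : n * q + r = k := Nat.div_add_mod k n
    have hkqr2 : q * n + r = k := by rw [Nat.mul_comm q n]; exact hkqr
    have hrn : r < n := Nat.mod_lt k hnn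
    have step1 : supNu ν 𝒜 k ≤ supNu ν 𝒜 n ^ q * C := by
      rw [← hkqr]
      exact le_trans (haux q r) (mul_le_mul_of_nonneg_left (hrC r hrn.le)
        (pow_nonneg han q))
    have step2 : (supNu ν 𝒜 n) ^ ((q:ℕ) : ℝ) ≤ (supNu ν 𝒜 n) ^ ((k : ℝ) / n) * D := by
      rcases le_or_gt 1 (supNu ν 𝒜 n) with hb | hb
      · have hqk : ((q:ℕ) : ℝ) ≤ (k : ℝ) / n := by
          rw [le_div_iff₀ (by positivity : (0:ℝ) < (n:ℝ))]
          have h5 : q * n ≤ k := by omega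
          exact_mod_cast h5
        calc (supNu ν 𝒜 n) ^ ((q:ℕ) : ℝ) ≤ (supNu ν 𝒜 n) ^ ((k : ℝ) / n) :=
              Real.rpow_le_rpow_of_exponent_le hb hqk
          _ ≤ (supNu ν 𝒜 n) ^ ((k : ℝ) / n) * D :=
              le_mul_of_one_le_right (Real.rpow_nonneg han _) hD1
      · have hqk : (k : ℝ) / n - 1 ≤ ((q:ℕ) : ℝ) := by
          rw [sub_le_iff_le_add, div_le_iff₀ (by positivity : (0:ℝ) < (n:ℝ))]
          have h6 : k ≤ (q + 1) * n := by
            rw [Nat.succ_mul]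
            omega
          calc (k : ℝ) ≤ ((q + 1) * n : ℕ) := by exact_mod_cast h6
            _ = (((q:ℕ) : ℝ) + 1) * n := by push_cast; ring
        calc (supNu ν 𝒜 n) ^ ((q:ℕ) : ℝ) ≤ (supNu ν 𝒜 n) ^ ((k : ℝ) / n - 1) :=
              Real.rpow_le_rpow_of_exponent_ge hanpos hb.le hqk
          _ = (supNu ν 𝒜 n) ^ ((k : ℝ) / n) * (supNu ν 𝒜 n)⁻¹ := by
              rw [Real.rpow_sub hanpos, Real.rpow_one, div_eq_mul_inv]
          _ ≤ (supNu ν 𝒜 n) ^ ((k : ℝ) / n) * D :=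
              mul_le_mul_of_nonneg_left (le_max_right _ _) (Real.rpow_nonneg han _)
    have step3 : supNu ν 𝒜 k ≤ (supNu ν 𝒜 n) ^ ((k : ℝ) / n) * C' := by
      calc supNu ν 𝒜 k ≤ supNu ν 𝒜 n ^ q * C := step1
        _ = (supNu ν 𝒜 n) ^ ((q:ℕ) : ℝ) * C := by rw [Real.rpow_natCast]
        _ ≤ ((supNu ν 𝒜 n) ^ ((k : ℝ) / n) * D) * C :=
            mul_le_mul_of_nonneg_right step2 (by linarith)
        _ = (supNu ν 𝒜 n) ^ ((k : ℝ) / n) * C' := by rw [hC'def]; ring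
    calc (supNu ν 𝒜 k) ^ ((k : ℝ)⁻¹)
        ≤ ((supNu ν 𝒜 n) ^ ((k : ℝ) / n) * C') ^ ((k : ℝ)⁻¹) :=
          Real.rpow_le_rpow (supNu_nonneg hν hd hfin hne k) step3
            (inv_nonneg.mpr (Nat.cast_nonneg k))
      _ = ((supNu ν 𝒜 n) ^ ((k : ℝ) / n)) ^ ((k : ℝ)⁻¹) * C' ^ ((k : ℝ)⁻¹) :=
          Real.mul_rpow (Real.rpow_nonneg han _) (by linarith)
      _ = (supNu ν 𝒜 n) ^ ((n : ℝ)⁻¹) * C' ^ ((k : ℝ)⁻¹) := by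
          rw [← Real.rpow_mul han]
          congr 1
          rw [div_mul_eq_mul_div, mul_inv_cancel₀ hkc, one_div]
  -- pass to the limsup
  have hg : Filter.Tendsto (fun k : ℕ => (supNu ν 𝒜 n) ^ ((n : ℝ)⁻¹) * C' ^ ((k : ℝ)⁻¹))
      Filter.atTop (nhds ((supNu ν 𝒜 n) ^ ((n : ℝ)⁻¹))) := by
    have h1 := (tendsto_rpow_inv_nat_one hC'0).const_mul ((supNu ν 𝒜 n) ^ ((n : ℝ)⁻¹))
    simpa using h1
  rw [jsrNu_eq]
  calc Filter.limsup (fun k : ℕ => (supNu ν 𝒜 k) ^ ((k : ℝ)⁻¹)) Filter.atTop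
      ≤ Filter.limsup (fun k : ℕ => (supNu ν 𝒜 n) ^ ((n : ℝ)⁻¹) * C' ^ ((k : ℝ)⁻¹))
        Filter.atTop := by
        refine Filter.limsup_le_limsup ?_ ?_ ?_
        · filter_upwards [Filter.eventually_ge_atTop 1] with k hk
          exact claim k hk
        · refine Filter.IsBoundedUnder.isCoboundedUnder_le ?_
          exact Filter.isBoundedUnder_of ⟨0, fun k =>
            Real.rpow_nonneg (supNu_nonneg hν hd hfin hne k) _⟩
        · exact hg.isBoundedUnder_le
    _ = (supNu ν 𝒜 n) ^ ((n : ℝ)⁻¹) := hg.limsup_eq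

end LimsupLemmas

/-- main theorem, second part: for irreducible `𝒜` and `p ≥ d − 1`,
`(ν_p(𝒜))^{−1/n} ‖𝒜ⁿ‖^{1/n} ≤ ρ(𝒜) ≤ ‖𝒜ⁿ‖^{1/n}` with
`ν_p(𝒜) = max{1, ‖𝒜‖^p} / χ_p(𝒜)`. -/
theorem statement9 {d : ℕ} (𝒜 : Finset (Matrix (Fin d) (Fin d) ℝ)) (h𝒜 : 𝒜.Nonempty)
    (ν : (Fin d → ℝ) → ℝ) (hν : IsNorm ν)
    (hirr : MatSetIrreducible (↑𝒜 : Set (Matrix (Fin d) (Fin d) ℝ)))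
    (p : ℕ) (hp : d - 1 ≤ p) (n : ℕ) (hn : 1 ≤ n) :
    ((max 1 ((supNu ν (↑𝒜 : Set (Matrix (Fin d) (Fin d) ℝ)) 1) ^ p) /
        chi ν (↑𝒜 : Set (Matrix (Fin d) (Fin d) ℝ)) p) ^ ((n : ℝ)⁻¹))⁻¹ *
      (supNu ν (↑𝒜 : Set (Matrix (Fin d) (Fin d) ℝ)) n) ^ ((n : ℝ)⁻¹) ≤
      jsrNu ν (↑𝒜 : Set (Matrix (Fin d) (Fin d) ℝ)) ∧
    jsrNu ν (↑𝒜 : Set (Matrix (Fin d) (Fin d) ℝ)) ≤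
      (supNu ν (↑𝒜 : Set (Matrix (Fin d) (Fin d) ℝ)) n) ^ ((n : ℝ)⁻¹) := by
  have hfin : (↑𝒜 : Set (Matrix (Fin d) (Fin d) ℝ)).Finite := 𝒜.finite_toSet
  have hne : (↑𝒜 : Set (Matrix (Fin d) (Fin d) ℝ)).Nonempty := Finset.coe_nonempty.mpr h𝒜
  have hn0 : ((n : ℝ))⁻¹ ≠ 0 := inv_ne_zero (Nat.cast_ne_zero.mpr (by omega))
  rcases Nat.eq_zero_or_pos d with hd0 | hd
  · -- degenerate case `d = 0`
    subst hd0
    have hsph : {x : Fin 0 → ℝ | ν x = 1} = ∅ := by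
      ext x
      simp only [Set.mem_setOf_eq, Set.mem_empty_iff_false, iff_false]
      have hx0 : x = 0 := funext fun i => i.elim0
      rw [hx0, nu_zero hν]
      norm_num
    have hop : ∀ A : Matrix (Fin 0) (Fin 0) ℝ, opNorm ν A = 0 := by
      intro A
      show sSup _ = 0
      rw [hsph, Set.image_empty, Real.sSup_empty]
    have ha : ∀ k, supNu ν (↑𝒜 : Set (Matrix (Fin 0) (Fin 0) ℝ)) k = 0 := by
      intro k
      obtain ⟨P₀, hP₀⟩ := prods_nonempty hne k
      refine le_antisymm (csSup_le ((prods_nonempty hne k).image _) ?_)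
        (le_csSup ⟨0, ?_⟩ ⟨P₀, hP₀, hop P₀⟩)
      · rintro r ⟨P, hP, rfl⟩; exact (hop P).le
      · rintro r ⟨P, hP, rfl⟩; exact (hop P).le
    have hjsr : jsrNu ν (↑𝒜 : Set (Matrix (Fin 0) (Fin 0) ℝ)) = 0 := by
      rw [jsrNu_eq]
      have heq : Filter.limsup
          (fun k : ℕ => (supNu ν (↑𝒜 : Set (Matrix (Fin 0) (Fin 0) ℝ)) k) ^ ((k : ℝ)⁻¹))
          Filter.atTop = Filter.limsup (fun _ : ℕ => (0:ℝ)) Filter.atTop := by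
        apply Filter.limsup_congr
        filter_upwards [Filter.eventually_ge_atTop 1] with k hk
        rw [ha k, Real.zero_rpow (inv_ne_zero (Nat.cast_ne_zero.mpr (by omega)))]
      rw [heq, Filter.limsup_const]
    have hchi : chi ν (↑𝒜 : Set (Matrix (Fin 0) (Fin 0) ℝ)) p = 0 := by
      rw [chi_eq, hsph, Set.image_empty, Real.sInf_empty]
    constructor
    · rw [hchi, div_zero, Real.zero_rpow hn0, inv_zero, zero_mul, hjsr]
    · rw [hjsr, ha n, Real.zero_rpow hn0]
  · exact ⟨jsr_lower hν hd hfin hne hn, jsr_upper hν hd hfin hne hn⟩
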